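/- For every t, the following identity holds: ∫ ∂_tT(t,x) · T(t,x) · R(t,x)² dμ(x) = − ∫ T(t,x) · Φ(t,x) · R(t,x)² dμ(x) − ½ ∫ T(t,x)² · F(t,x) · R(t,x)² dμ(x). -/

import Mathlib

open MeasureTheory

lemma aux_mul_integrable {Ω : Type*} [MeasurableSpace Ω] {μ : Measure Ω} {f g : Ω → ℝ}
    (hf : MemLp f 2 μ) (hg : MemLp g 2 μ) : Integrable (fun x => f x * g x) μ := by
  have h := MemLp.smul (r := 1) hg hf
  have := memLp_one_iff_integrable.mp h
  exact this

set_option maxHeartbeats 2000000 in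
/-- Key identity in the Fisher–Rao Lyapunov analysis:
`∫ ∂ₜT · T · R² dμ = −∫ T · Φ · R² dμ − ½ ∫ T² · F · R² dμ`. -/
theorem fisher_rao_transport_derivative_identity
    {Ω : Type*} [MeasurableSpace Ω] (μ : Measure Ω)
    (R Φ : ℝ → Ω → ℝ) (Rstar : Ω → ℝ)
    (c m H : ℝ → ℝ) (F T : ℝ → Ω → ℝ)
    (hRstarnorm : ∫ x, (Rstar x)^2 ∂μ = 1)
    (hRpos : ∀ t x, 0 < R t x)
    (hRnorm : ∀ t, ∫ x, (R t x)^2 ∂μ = 1)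
    (hΦdiff : ∀ t x, DifferentiableAt ℝ (fun s => Φ s x) t)
    (hm : ∀ t, m t = ∫ x, Φ t x * (R t x)^2 ∂μ)
    (hF : ∀ t x, F t x = Φ t x - m t)
    (hflowR : ∀ t x, HasDerivAt (fun s => R s x) ((1/2) * F t x * R t x) t)
    (hc : ∀ t, c t = ∫ x, R t x * Rstar x ∂μ)
    (hcIoo : ∀ t, c t ∈ Set.Ioo (0:ℝ) 1)
    (hH : ∀ t, H t = Real.arccos (c t))
    (hT : ∀ t x, T t x = (2 * H t / Real.sin (H t)) * (Rstar x - R t x * c t) / R t x)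
    (hc' : ∀ t, HasDerivAt c (∫ x, ((1/2) * F t x * R t x) * Rstar x ∂μ) t)
    (hL2F : ∀ t, MemLp (fun x => F t x * R t x) 2 μ)
    (hL2T : ∀ t, MemLp (fun x => (Rstar x / R t x - c t) * R t x) 2 μ)
    (hint1 : ∀ t, Integrable (fun x => deriv (fun s => T s x) t * T t x * (R t x)^2) μ)
    (hint2 : ∀ t, Integrable (fun x => T t x * Φ t x * (R t x)^2) μ)
    (hint3 : ∀ t, Integrable (fun x => (T t x)^2 * F t x * (R t x)^2) μ) :
    ∀ t : ℝ,
      (∫ x, deriv (fun s => T s x) t * T t x * (R t x)^2 ∂μ)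
        = - (∫ x, T t x * Φ t x * (R t x)^2 ∂μ)
          - (1/2) * ∫ x, (T t x)^2 * F t x * (R t x)^2 ∂μ := by
  intro t
  obtain ⟨hc0pos, hc0lt⟩ := hcIoo t
  have hRne : ∀ x, R t x ≠ 0 := fun x => (hRpos t x).ne'
  set c0 : ℝ := c t with hc0def
  set c1 : ℝ := ∫ x, ((1/2) * F t x * R t x) * Rstar x ∂μ with hc1def
  -- basic integrability from nonvanishing integrals
  have hRsq : Integrable (fun x => (R t x)^2) μ := by
    by_contra h
    have h1 := hRnorm t
    rw [integral_undef h] at h1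
    exact one_ne_zero h1.symm
  have hRstarsq : Integrable (fun x => (Rstar x)^2) μ := by
    by_contra h
    rw [integral_undef h] at hRstarnorm
    exact one_ne_zero hRstarnorm.symm
  have hRRstar : Integrable (fun x => R t x * Rstar x) μ := by
    by_contra h
    have h1 := hc t
    rw [integral_undef h] at h1
    have h2 := hc0pos
    rw [hc0def, h1] at h2
    exact lt_irrefl 0 h2
  -- measurability
  have hRae : AEStronglyMeasurable (fun x => R t x) μ := by
    have heq : (fun x => R t x) = fun x => Real.sqrt ((R t x)^2) := by
      funext x; rw [Real.sqrt_sq (hRpos t x).le]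
    rw [heq]
    exact Real.continuous_sqrt.comp_aestronglyMeasurable hRsq.aestronglyMeasurable
  have hgL2 := hL2T t
  have hfL2 := hL2F t
  have hRL2 : MemLp (fun x => R t x) 2 μ :=
    (memLp_two_iff_integrable_sq hRae).mpr hRsq
  have hRstarae : AEStronglyMeasurable Rstar μ := by
    have heq : Rstar = fun x => (Rstar x / R t x - c t) * R t x + c0 * R t x := by
      funext x
      have hx := hRne x
      field_simp
      rw [hc0def]
      ring
    rw [heq]
    exact hgL2.aestronglyMeasurable.add (hRae.const_smul c0)
  have hRstarL2 : MemLp Rstar 2 μ :=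
    (memLp_two_iff_integrable_sq hRstarae).mpr hRstarsq
  -- integrable building blocks
  have hP1 : Integrable (fun x => (Rstar x - c0 * R t x)^2) μ := by
    have heq : (fun x => (Rstar x - c0 * R t x)^2)
        = fun x => (Rstar x)^2 - (2*c0) * (R t x * Rstar x) + c0^2 * (R t x)^2 := by
      funext x; ring
    rw [heq]
    exact ((hRstarsq.sub (hRRstar.const_mul (2*c0))).add (hRsq.const_mul (c0^2)))
  have hP1val : ∫ x, (Rstar x - c0 * R t x)^2 ∂μ = 1 - c0^2 := by
    have heq : (fun x => (Rstar x - c0 * R t x)^2)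
        = fun x => (Rstar x)^2 - (2*c0) * (R t x * Rstar x) + c0^2 * (R t x)^2 := by
      funext x; ring
    have hA : Integrable (fun x => (Rstar x)^2 - (2*c0) * (R t x * Rstar x)) μ :=
      hRstarsq.sub (hRRstar.const_mul (2*c0))
    have hB : Integrable (fun x => c0^2 * (R t x)^2) μ := hRsq.const_mul (c0^2)
    rw [heq, integral_add hA hB, integral_sub hRstarsq (hRRstar.const_mul (2*c0)),
      integral_const_mul, integral_const_mul, hRstarnorm, hRnorm t, ← hc t]
    ring
  have hP4 : Integrable (fun x => R t x * Rstar x - c0 * (R t x)^2) μ :=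
    hRRstar.sub (hRsq.const_mul c0)
  have hP4val : ∫ x, (R t x * Rstar x - c0 * (R t x)^2) ∂μ = 0 := by
    rw [integral_sub hRRstar (hRsq.const_mul c0), integral_const_mul, hRnorm t, ← hc t]
    ring
  have hFRR : Integrable (fun x => F t x * R t x * R t x) μ := by
    have := aux_mul_integrable hfL2 hRL2
    simpa using this
  have hFRRstar : Integrable (fun x => F t x * R t x * Rstar x) μ := by
    have := aux_mul_integrable hfL2 hRstarL2
    simpa using this
  have hΦR2 : Integrable (fun x => Φ t x * (R t x)^2) μ := by
    have heq : (fun x => Φ t x * (R t x)^2)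
        = fun x => F t x * R t x * R t x + m t * (R t x)^2 := by
      funext x; rw [hF t x]; ring
    rw [heq]
    exact hFRR.add (hRsq.const_mul (m t))
  have hFRRval : ∫ x, F t x * R t x * R t x ∂μ = 0 := by
    have heq : (fun x => F t x * R t x * R t x)
        = fun x => Φ t x * (R t x)^2 - m t * (R t x)^2 := by
      funext x; rw [hF t x]; ring
    rw [heq, integral_sub hΦR2 (hRsq.const_mul (m t)), integral_const_mul, hRnorm t, ← hm t]
    ring
  have hFRRstarval : ∫ x, F t x * R t x * Rstar x ∂μ = 2 * c1 := by
    rw [hc1def, ← integral_const_mul]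
    congr 1
    funext x; ring
  have hP3 : Integrable (fun x => F t x * R t x * ((Rstar x / R t x - c t) * R t x)) μ :=
    aux_mul_integrable hfL2 hgL2
  have hP3val : ∫ x, F t x * R t x * ((Rstar x / R t x - c t) * R t x) ∂μ = 2 * c1 := by
    have heq : (fun x => F t x * R t x * ((Rstar x / R t x - c t) * R t x))
        = fun x => F t x * R t x * Rstar x - c0 * (F t x * R t x * R t x) := by
      funext x
      have := hRne x
      field_simp
      ring
    rw [heq, integral_sub hFRRstar (hFRR.const_mul c0), integral_const_mul, hFRRval,
      hFRRstarval]
    ring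
  -- the scalar coefficients
  set s0 : ℝ := Real.sin (H t) with hs0def
  have hs0 : s0 = Real.sqrt (1 - c0^2) := by rw [hs0def, hH t, Real.sin_arccos]
  have hs0pos : 0 < s0 := by
    rw [hs0]
    apply Real.sqrt_pos.mpr
    nlinarith
  have hs0sq : s0^2 = 1 - c0^2 := by
    rw [hs0]
    exact Real.sq_sqrt (by nlinarith)
  set l0 : ℝ := 2 * H t / s0 with hl0def
  set ld : ℝ := c1 * (-2/s0^2 + 2*(H t)*c0/s0^3) with hlddef
  have hc0ne1 : c0 ≠ 1 := ne_of_lt hc0lt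
  have hc0nem1 : c0 ≠ -1 := by intro h; rw [h] at hc0pos; linarith
  -- derivative of the prefactor
  have harccos : HasDerivAt (fun s => Real.arccos (c s)) (-(1/Real.sqrt (1 - c0^2)) * c1) t :=
    (Real.hasDerivAt_arccos hc0nem1 hc0ne1).comp t (hc' t)
  have hnum : HasDerivAt (fun s => 2 * Real.arccos (c s)) (2 * (-(1/Real.sqrt (1 - c0^2)) * c1)) t :=
    harccos.const_mul 2
  have hden : HasDerivAt (fun s => Real.sin (Real.arccos (c s)))
      (Real.cos (Real.arccos c0) * (-(1/Real.sqrt (1 - c0^2)) * c1)) t :=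
    by have := (Real.hasDerivAt_sin (Real.arccos c0)).comp t harccos; exact this
  have hdenne : Real.sin (Real.arccos c0) ≠ 0 := by
    rw [Real.sin_arccos, ← hs0]; exact hs0pos.ne'
  have hLder : HasDerivAt (fun s => 2 * Real.arccos (c s) / Real.sin (Real.arccos (c s))) ld t := by
    have h := hnum.div hden hdenne
    refine h.congr_deriv ?_
    symm
    have hs0ne : s0 ≠ 0 := hs0pos.ne'
    rw [hlddef, Real.cos_arccos (by linarith) hc0lt.le, ← hH t, ← hs0def,
      show Real.sqrt (1 - c0^2) = s0 from hs0.symm]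
    field_simp
    ring
  have hl0eq : l0 = 2 * Real.arccos c0 / Real.sin (Real.arccos c0) := by
    rw [hl0def, hs0def, hH t]
  -- pointwise derivative of T
  have hTder : ∀ x, HasDerivAt (fun s => T s x)
      (ld * ((Rstar x - R t x * c0) / R t x)
        + l0 * (-(1/2) * F t x * Rstar x / R t x - c1)) t := by
    intro x
    have hTeq : (fun s => T s x)
        = fun s => (2 * Real.arccos (c s) / Real.sin (Real.arccos (c s)))
            * (Rstar x - R s x * c s) / R s x := by
      funext s; rw [hT s x, hH s]
    rw [hTeq]
    have hN : HasDerivAt (fun s => Rstar x - R s x * c s)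
        (-((1/2) * F t x * R t x * c0 + R t x * c1)) t := by
      have h := ((hflowR t x).mul (hc' t)).const_sub (Rstar x)
      refine h.congr_deriv ?_
      symm
      all_goals rw [← hc1def, ← hc0def]
    have h := (hLder.mul hN).div (hflowR t x) (hRne x)
    refine h.congr_deriv ?_
    symm
    simp only [Pi.mul_apply]
    rw [← hc0def]
    rw [hl0eq]
    have hR := hRne x
    field_simp
    try ring
  have hderiveq : ∀ x, deriv (fun s => T s x) t
      = ld * ((Rstar x - R t x * c0) / R t x)
        + l0 * (-(1/2) * F t x * Rstar x / R t x - c1) :=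
    fun x => (hTder x).deriv
  -- rewrite the T-function at time t
  have hTt : ∀ x, T t x = l0 * (Rstar x - R t x * c0) / R t x := by
    intro x; rw [hT t x, hl0def, hs0def, hc0def]
  -- key pointwise decomposition of the integrand on the LHS
  have hkey : (fun x => deriv (fun s => T s x) t * T t x * (R t x)^2)
      = fun x => (ld * l0) * (Rstar x - c0 * R t x)^2
          - (1/2) * ((T t x)^2 * F t x * (R t x)^2)
          - ((1/2) * l0^2 * c0) * (F t x * R t x * ((Rstar x / R t x - c t) * R t x))
          - (l0^2 * c1) * (R t x * Rstar x - c0 * (R t x)^2) := by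
    funext x
    rw [hderiveq x, hTt x]
    have hR := hRne x
    rw [← hc0def]
    field_simp
    ring
  -- key pointwise decomposition of the first integrand on the RHS
  have hkey2 : (fun x => T t x * Φ t x * (R t x)^2)
      = fun x => l0 * (F t x * R t x * ((Rstar x / R t x - c t) * R t x))
          + (l0 * m t) * (R t x * Rstar x - c0 * (R t x)^2) := by
    funext x
    rw [hTt x, hF t x]
    have hR := hRne x
    rw [← hc0def]
    field_simp
    ring
  -- compute the integrals
  have hI2 := hint3 t
  have hA1 : Integrable (fun x => (ld * l0) * (Rstar x - c0 * R t x)^2) μ := hP1.const_mul _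
  have hA2 : Integrable (fun x => (1/2) * ((T t x)^2 * F t x * (R t x)^2)) μ := hI2.const_mul _
  have hA3 : Integrable
      (fun x => ((1/2) * l0^2 * c0) * (F t x * R t x * ((Rstar x / R t x - c t) * R t x))) μ :=
    hP3.const_mul _
  have hA4 : Integrable (fun x => (l0^2 * c1) * (R t x * Rstar x - c0 * (R t x)^2)) μ :=
    hP4.const_mul _
  have hA12 : Integrable (fun x => (ld * l0) * (Rstar x - c0 * R t x)^2
      - (1/2) * ((T t x)^2 * F t x * (R t x)^2)) μ := hA1.sub hA2
  have hA123 : Integrable (fun x => (ld * l0) * (Rstar x - c0 * R t x)^2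
      - (1/2) * ((T t x)^2 * F t x * (R t x)^2)
      - ((1/2) * l0^2 * c0) * (F t x * R t x * ((Rstar x / R t x - c t) * R t x))) μ :=
    hA12.sub hA3
  have hB1 : Integrable
      (fun x => l0 * (F t x * R t x * ((Rstar x / R t x - c t) * R t x))) μ := hP3.const_mul _
  have hB2 : Integrable (fun x => (l0 * m t) * (R t x * Rstar x - c0 * (R t x)^2)) μ :=
    hP4.const_mul _
  rw [hkey, hkey2]
  rw [integral_sub hA123 hA4, integral_sub hA12 hA3, integral_sub hA1 hA2,
    integral_add hB1 hB2, integral_const_mul, integral_const_mul, integral_const_mul,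
    integral_const_mul, integral_const_mul, integral_const_mul,
    hP1val, hP3val, hP4val]
  -- final scalar identity
  have hs0ne : s0 ≠ 0 := hs0pos.ne'
  have hfinal : ld * l0 * (1 - c0^2) - (1/2 * l0^2 * c0) * (2*c1) = -(l0 * (2*c1)) := by
    rw [hlddef, hl0def, ← hs0sq]
    field_simp
    ring
  linarith [hfinal]
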